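/- Let p ≡ 1 (mod 6) be a prime such that 2 is not a cube modulo p while both 6 and 20 are cubes modulo p. Then the ordered 7-tuple A = (0,1,2,3,4,5,6) is the initial block of a Fano Kaleidoscopic difference family in Z/pZ: for any set S of representatives for the cosets of {1,−1} in C^3, the family { s·A : s ∈ S } (multiplying each coordinate of A by s) is an FKDF(p). -/

import Mathlib

section KaleidoscopeDefs

variable {G V : Type*}

/-- The multiset of differences `x - y` over ordered pairs of distinct elements of `B`. -/
def diffMultiset [AddGroup G] [DecidableEq G] (B : Finset G) : Multiset G :=
  ((B ×ˢ B).filter fun p => p.1 ≠ p.2).val.map fun p => p.1 - p.2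

/-- A `(G, k, lam)`-difference family, given as a multiset of blocks. -/
def IsDiffFamily [AddGroup G] [DecidableEq G] (k lam : ℕ) (𝓕 : Multiset (Finset G)) : Prop :=
  (∀ B ∈ 𝓕, B.card = k) ∧ ∀ g : G, g ≠ 0 → (𝓕.bind diffMultiset).count g = lam

/-- The `j`-th line `{b_j, b_{j+1}, b_{j+3}}` (indices mod 7) of an ordered 7-tuple. -/
def fanoLine [DecidableEq G] (B : Fin 7 → G) (j : Fin 7) : Finset G :=
  {B j, B (j + 1), B (j + 3)}

/-- A Fano Kaleidoscopic difference family: a family of ordered 7-tuples of distinct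
elements such that for each `j` the family of `j`-th lines is a `(G,3,1)`-DF. -/
def IsFKDF [AddGroup G] [DecidableEq G] (𝓕 : Multiset (Fin 7 → G)) : Prop :=
  (∀ B ∈ 𝓕, Function.Injective B) ∧
    ∀ j : Fin 7, IsDiffFamily 3 1 (𝓕.map fun B => fanoLine B j)

/-- The `i`-th line of an ordered 9-tuple `(binf, b_0, …, b_7)`:
`{b_i, b_{i+1}, b_{i+3}}` (indices mod 8) for `0 ≤ i ≤ 7`, and
`{binf, b_{i-8}, b_{i-4}}` for `8 ≤ i ≤ 11`. -/
def hesseLine [DecidableEq G] (binf : G) (b : Fin 8 → G) (i : Fin 12) : Finset G :=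
  if h : (i : ℕ) < 8 then
    {b ⟨i, h⟩, b (⟨i, h⟩ + 1), b (⟨i, h⟩ + 3)}
  else
    {binf, b ⟨(i : ℕ) - 8, by have := i.isLt; omega⟩,
      b (⟨(i : ℕ) - 8, by have := i.isLt; omega⟩ + 4)}

/-- A Hesse Kaleidoscopic difference family: a family of ordered 9-tuples of distinct
elements such that for each `i` the family of `i`-th lines is a `(G,3,1)`-DF. -/
def IsHKDF [AddGroup G] [DecidableEq G] (𝓕 : Multiset (G × (Fin 8 → G))) : Prop :=
  (∀ B ∈ 𝓕, Function.Injective B.2 ∧ ∀ k, B.1 ≠ B.2 k) ∧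
    ∀ i : Fin 12, IsDiffFamily 3 1 (𝓕.map fun B => hesseLine B.1 B.2 i)

/-- The point set of a colored plane given by its (colored) lines. -/
def linesPts [DecidableEq V] {n : ℕ} (L : Fin n → Finset V) : Finset V :=
  Finset.univ.biUnion L

/-- `L` describes a Fano plane with points in `V`, where `L i` is the line colored `c_i`:
7 points, seven 3-element lines, and any two distinct points on exactly one line. -/
def IsColoredFano [DecidableEq V] (L : Fin 7 → Finset V) : Prop :=
  (linesPts L).card = 7 ∧ (∀ i, (L i).card = 3) ∧
    ∀ x y : V, x ∈ linesPts L → y ∈ linesPts L → x ≠ y →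
      ∃! i : Fin 7, x ∈ L i ∧ y ∈ L i

/-- A Fano Kaleidoscope on the point set `V`: a multiset of line-colored Fano planes such
that for all distinct `x y` and every color `i` exactly one plane has `x, y` on its
`c_i`-colored line. -/
def IsFanoKaleidoscope [DecidableEq V] (K : Multiset (Fin 7 → Finset V)) : Prop :=
  (∀ L ∈ K, IsColoredFano L) ∧
    ∀ x y : V, x ≠ y → ∀ i : Fin 7,
      Multiset.countP (fun L => x ∈ L i ∧ y ∈ L i) K = 1

/-- A `G`-regular Fano Kaleidoscope: a Fano Kaleidoscope with point set `G` invariant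
(with colors) under all translations. -/
def IsRegularFK (G : Type*) [AddGroup G] [DecidableEq G]
    (K : Multiset (Fin 7 → Finset G)) : Prop :=
  IsFanoKaleidoscope K ∧ ∀ g : G, K.map (fun L => fun i => (L i).image (· + g)) = K

/-- `L` describes a Hesse plane (an `AG(2,3)`) with points in `V`, where `L i` is the line
colored `c_i`. -/
def IsColoredHesse [DecidableEq V] (L : Fin 12 → Finset V) : Prop :=
  (linesPts L).card = 9 ∧ (∀ i, (L i).card = 3) ∧
    ∀ x y : V, x ∈ linesPts L → y ∈ linesPts L → x ≠ y →
      ∃! i : Fin 12, x ∈ L i ∧ y ∈ L i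

/-- A Hesse Kaleidoscope on the point set `V`. -/
def IsHesseKaleidoscope [DecidableEq V] (K : Multiset (Fin 12 → Finset V)) : Prop :=
  (∀ L ∈ K, IsColoredHesse L) ∧
    ∀ x y : V, x ≠ y → ∀ i : Fin 12,
      Multiset.countP (fun L => x ∈ L i ∧ y ∈ L i) K = 1

/-- A `G`-regular Hesse Kaleidoscope. -/
def IsRegularHK (G : Type*) [AddGroup G] [DecidableEq G]
    (K : Multiset (Fin 12 → Finset G)) : Prop :=
  IsHesseKaleidoscope K ∧ ∀ g : G, K.map (fun L => fun i => (L i).image (· + g)) = K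

/-- An `(H, k, 1)`-difference matrix: a `k × |H|` matrix with entries in `H` such that the
difference of any two distinct rows contains each element of `H` exactly once. -/
def IsDiffMatrix (H : Type*) [AddGroup H] [Fintype H] (k : ℕ)
    (M : Fin k → Fin (Fintype.card H) → H) : Prop :=
  ∀ r s : Fin k, r ≠ s → Function.Bijective fun c => M r c - M s c

/-- A 2-`(v, k, lam)` design (block multiset) on the point set `V`. -/
def Is2Design [DecidableEq V] (k lam : ℕ) (𝓑 : Multiset (Finset V)) : Prop :=
  (∀ b ∈ 𝓑, b.card = k) ∧
    ∀ x y : V, x ≠ y → Multiset.countP (fun b => x ∈ b ∧ y ∈ b) 𝓑 = lam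

/-- A pairwise balanced design with block sizes in `K` on the point set `V`. -/
def IsPBD [DecidableEq V] (K : Set ℕ) (𝓑 : Multiset (Finset V)) : Prop :=
  (∀ b ∈ 𝓑, b.card ∈ K) ∧
    ∀ x y : V, x ≠ y → Multiset.countP (fun b => x ∈ b ∧ y ∈ b) 𝓑 = 1

/-- Existence of a Fano Kaleidoscope of order `v`. -/
def ExistsFK (v : ℕ) : Prop :=
  ∃ K : Multiset (Fin 7 → Finset (Fin v)), IsFanoKaleidoscope K

end KaleidoscopeDefs

def MyCube {p : ℕ} (x : ZMod p) : Prop := ∃ c : ZMod p, x = c ^ 3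

lemma MyCube.mul {n : ℕ} {x y : ZMod n} (hx : MyCube x) (hy : MyCube y) : MyCube (x * y) := by
  obtain ⟨a, rfl⟩ := hx; obtain ⟨b, rfl⟩ := hy; exact ⟨a * b, (mul_pow a b 3).symm⟩

lemma MyCube.inv {p : ℕ} [Fact p.Prime] {x : ZMod p} (hx : MyCube x) : MyCube x⁻¹ := by
  obtain ⟨a, rfl⟩ := hx; exact ⟨a⁻¹, by rw [inv_pow]⟩

lemma MyCube.neg {n : ℕ} {x : ZMod n} (hx : MyCube x) : MyCube (-x) := by
  obtain ⟨a, rfl⟩ := hx; exact ⟨-a, by ring⟩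

lemma myCube_neg_iff {n : ℕ} {x : ZMod n} : MyCube (-x) ↔ MyCube x :=
  ⟨fun h => by simpa using h.neg, MyCube.neg⟩

lemma diffMultiset_triple {G : Type*} [AddGroup G] [DecidableEq G] {x y z : G}
    (hxy : x ≠ y) (hxz : x ≠ z) (hyz : y ≠ z) :
    diffMultiset {x, y, z} = {x - z, x - y, z - y, y - x, z - x, y - z} := by
  have hv : ({x, y, z} : Finset G).val = x ::ₘ y ::ₘ {z} := by
    rw [Finset.insert_val_of_notMem (by simp [hxy, hxz]),
      Finset.insert_val_of_notMem (by simp [hyz])]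
    rfl
  unfold diffMultiset
  rw [Finset.filter_val, Finset.product_val, hv]
  simp only [Multiset.cons_product, Multiset.product_cons, Multiset.zero_product,
    Multiset.product_zero, Multiset.map_cons, Multiset.map_singleton, Multiset.filter_add,
    Multiset.filter_cons, Multiset.filter_singleton]
  simp [hxy, hxz, hyz, hxy.symm, hxz.symm, hyz.symm, Multiset.filter_singleton]

section master
variable {p : ℕ} [Fact p.Prime]

lemma cube_zpow_iff (h1 : p % 6 = 1) (ζ : (ZMod p)ˣ)
    (hζ : ∀ x : (ZMod p)ˣ, x ∈ Subgroup.zpowers ζ) (n : ℤ) :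
    MyCube (((ζ ^ n : (ZMod p)ˣ) : ZMod p)) ↔ (3:ℤ) ∣ n := by
  have hord : orderOf ζ = p - 1 := by
    rw [orderOf_eq_card_of_forall_mem_zpowers hζ, Nat.card_eq_fintype_card, ZMod.card_units]
  have hp7 : 7 ≤ p := by
    have := (Fact.out : p.Prime).two_le
    rcases Nat.lt_or_ge p 7 with h | h
    · interval_cases p <;> simp_all
    · exact h
  constructor
  · rintro ⟨c, hc⟩
    have hcne : c ≠ 0 := by
      rintro rfl
      rw [zero_pow (by norm_num)] at hc
      exact (ζ ^ n).ne_zero hc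
    obtain ⟨m, hm⟩ := hζ (Units.mk0 c hcne)
    have hm' : ζ ^ m = Units.mk0 c hcne := hm
    have heq : (ζ ^ n : (ZMod p)ˣ) = ζ ^ (m * 3) := by
      rw [zpow_mul, hm']
      ext
      push_cast [hc]
      norm_cast
    have hmod := (zpow_eq_zpow_iff_modEq.mp heq)
    rw [hord] at hmod
    obtain ⟨k, hk⟩ := hmod.dvd
    have hpk : ((p - 1 : ℕ) : ℤ) = (p : ℤ) - 1 := by
      push_cast [Nat.cast_sub (by omega : 1 ≤ p)]; ring
    rw [hpk] at hk
    have h3 : (3:ℤ) ∣ ((p:ℤ) - 1) := by omega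
    have h3' : (3:ℤ) ∣ m * 3 - n := hk ▸ h3.mul_right k
    omega
  · rintro ⟨m, rfl⟩
    refine ⟨((ζ ^ m : (ZMod p)ˣ) : ZMod p), ?_⟩
    rw [← Units.val_pow_eq_pow_val, ← zpow_natCast, ← zpow_mul]
    norm_num [mul_comm]

lemma exists_cube_class (h1 : p % 6 = 1) {d1 d2 d3 g : ZMod p}
    (n1 : d1 ≠ 0) (n2 : d2 ≠ 0) (n3 : d3 ≠ 0) (hg : g ≠ 0)
    (q12 : ¬ MyCube (d1 * d2⁻¹)) (q13 : ¬ MyCube (d1 * d3⁻¹)) (q23 : ¬ MyCube (d2 * d3⁻¹)) :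
    MyCube (g * d1⁻¹) ∨ MyCube (g * d2⁻¹) ∨ MyCube (g * d3⁻¹) := by
  obtain ⟨ζ, hζ⟩ := IsCyclic.exists_generator (α := (ZMod p)ˣ)
  have log : ∀ x : ZMod p, x ≠ 0 → ∃ n : ℤ, x = ((ζ ^ n : (ZMod p)ˣ) : ZMod p) := by
    intro x hx
    obtain ⟨n, hn⟩ := hζ (Units.mk0 x hx)
    have hn' : ζ ^ n = Units.mk0 x hx := hn
    exact ⟨n, by rw [hn']; rfl⟩
  have quot : ∀ u v : ℤ, ((ζ ^ u : (ZMod p)ˣ) : ZMod p) * ((ζ ^ v : (ZMod p)ˣ) : ZMod p)⁻¹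
      = ((ζ ^ (u - v) : (ZMod p)ˣ) : ZMod p) := by
    intro u v
    rw [zpow_sub, Units.val_mul, Units.val_inv_eq_inv_val]
  obtain ⟨a, ha⟩ := log d1 n1
  obtain ⟨b, hb⟩ := log d2 n2
  obtain ⟨c, hc⟩ := log d3 n3
  obtain ⟨m, hm⟩ := log g hg
  rw [ha, hb, quot, cube_zpow_iff h1 ζ hζ] at q12
  rw [ha, hc, quot, cube_zpow_iff h1 ζ hζ] at q13
  rw [hb, hc, quot, cube_zpow_iff h1 ζ hζ] at q23
  rw [hm, ha, hb, hc, quot, quot, quot, cube_zpow_iff h1 ζ hζ, cube_zpow_iff h1 ζ hζ,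
    cube_zpow_iff h1 ζ hζ]
  omega

lemma master (h1 : p % 6 = 1)
    (S : Finset (ZMod p))
    (hS1 : ∀ s ∈ S, s ≠ 0 ∧ MyCube s)
    (hS2 : ∀ x : ZMod p, x ≠ 0 → MyCube x → ∃! s, s ∈ S ∧ (x = s ∨ x = -s))
    (x y z d1 d2 d3 : ZMod p)
    (e1 : y - x = d1) (e2 : z - x = d2) (e3 : z - y = d3)
    (n1 : d1 ≠ 0) (n2 : d2 ≠ 0) (n3 : d3 ≠ 0)
    (q12 : ¬ MyCube (d1 * d2⁻¹)) (q13 : ¬ MyCube (d1 * d3⁻¹)) (q23 : ¬ MyCube (d2 * d3⁻¹)) :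
    IsDiffFamily 3 1 (S.val.map fun s => ({s * x, s * y, s * z} : Finset (ZMod p))) := by
  have hp7 : 7 ≤ p := by
    have := (Fact.out : p.Prime).two_le
    rcases Nat.lt_or_ge p 7 with h | h
    · interval_cases p <;> simp_all
    · exact h
  have h2ne : (2 : ZMod p) ≠ 0 := by
    have : ((2:ℕ) : ZMod p) ≠ 0 := by
      rw [Ne, ZMod.natCast_eq_zero_iff]
      intro hd
      have := Nat.le_of_dvd (by norm_num) hd
      omega
    simpa using this
  have hxy : x ≠ y := fun h => n1 (by rw [← e1, h, sub_self])
  have hxz : x ≠ z := fun h => n2 (by rw [← e2, h, sub_self])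
  have hyz : y ≠ z := fun h => n3 (by rw [← e3, h, sub_self])
  constructor
  · intro B hB
    obtain ⟨s, hs, rfl⟩ := Multiset.mem_map.mp hB
    have hs0 := (hS1 s hs).1
    rw [Finset.card_eq_three]
    exact ⟨s * x, s * y, s * z, fun h => hxy (mul_left_cancel₀ hs0 h),
      fun h => hxz (mul_left_cancel₀ hs0 h), fun h => hyz (mul_left_cancel₀ hs0 h), rfl⟩
  · intro g hg
    -- helper: membership pair values
    have pairNo : ∀ u : ZMod p, ¬ MyCube u →
        ((if u ∈ S then (1:ℕ) else 0) = 0 ∧ (if -u ∈ S then (1:ℕ) else 0) = 0) := by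
      intro u hu
      constructor
      · rw [if_neg]; intro hmem; exact hu (hS1 u hmem).2
      · rw [if_neg]; intro hmem; exact hu (myCube_neg_iff.mp (hS1 _ hmem).2)
    have pairYes : ∀ u : ZMod p, u ≠ 0 → MyCube u →
        ((if u ∈ S then (1:ℕ) else 0) + (if -u ∈ S then (1:ℕ) else 0) = 1) := by
      intro u hu hc
      obtain ⟨s, ⟨hsS, hcase⟩, huniq⟩ := hS2 u hu hc
      have hune : u ≠ -u := by
        intro h
        apply hu
        have h2 : (2:ZMod p) * u = 0 := by
          rw [two_mul]
          nth_rewrite 2 [h]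
          ring
        rcases mul_eq_zero.mp h2 with h' | h'
        · exact absurd h' h2ne
        · exact h'
      rcases hcase with h' | h'
      · have hmemS : u ∈ S := h' ▸ hsS
        rw [if_pos hmemS, if_neg, Nat.add_zero]
        intro hmem
        have h3 := huniq (-u) ⟨hmem, Or.inr (neg_neg u).symm⟩
        exact hune (h'.trans h3.symm)
      · have hmemneg : -u ∈ S := by rw [h', neg_neg]; exact hsS
        have hnotin : u ∉ S := by
          intro hmem
          have h3 := huniq u ⟨hmem, Or.inl rfl⟩
          have h4 : -u = s := by rw [h', neg_neg]
          exact hune (h3.trans h4.symm)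
        rw [if_pos hmemneg, if_neg hnotin]
    -- the count computation
    rw [Multiset.count_bind, Multiset.map_map]
    have hmapeq : Multiset.map ((fun b => Multiset.count g (diffMultiset b)) ∘
        fun s => ({s * x, s * y, s * z} : Finset (ZMod p))) S.val =
        Multiset.map (fun s =>
          (if g = s * d1 then (1:ℕ) else 0) + (if g = s * -d1 then 1 else 0) +
          ((if g = s * d2 then 1 else 0) + (if g = s * -d2 then 1 else 0)) +
          ((if g = s * d3 then 1 else 0) + (if g = s * -d3 then 1 else 0))) S.val := by
      refine Multiset.map_congr rfl fun s hs => ?_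
      have hs0 := (hS1 s hs).1
      have hxy' : s * x ≠ s * y := fun h => hxy (mul_left_cancel₀ hs0 h)
      have hxz' : s * x ≠ s * z := fun h => hxz (mul_left_cancel₀ hs0 h)
      have hyz' : s * y ≠ s * z := fun h => hyz (mul_left_cancel₀ hs0 h)
      show Multiset.count g (diffMultiset _) = _
      rw [diffMultiset_triple hxy' hxz' hyz',
        show s * x - s * z = s * -d2 by rw [← e2]; ring,
        show s * x - s * y = s * -d1 by rw [← e1]; ring,
        show s * z - s * y = s * d3 by rw [← e3]; ring,
        show s * y - s * x = s * d1 by rw [← e1]; ring,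
        show s * z - s * x = s * d2 by rw [← e2]; ring,
        show s * y - s * z = s * -d3 by rw [← e3]; ring]
      simp only [Multiset.insert_eq_cons, Multiset.count_cons, Multiset.count_singleton]
      ring
    rw [hmapeq, ← Finset.sum_eq_multiset_sum]
    have key : ∀ d : ZMod p, d ≠ 0 →
        (∑ s ∈ S, (if g = s * d then (1:ℕ) else 0)) = (if g * d⁻¹ ∈ S then 1 else 0) := by
      intro d hd
      have hcond : ∀ s : ZMod p, (g = s * d) = (s = g * d⁻¹) := by
        intro s
        apply propext
        constructor
        · rintro rfl; rw [mul_inv_cancel_right₀ hd]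
        · rintro rfl; rw [inv_mul_cancel_right₀ hd]
      simp only [hcond]
      exact Finset.sum_ite_eq' S (g * d⁻¹) (fun _ => 1)
    simp only [Finset.sum_add_distrib]
    rw [key d1 n1, key d2 n2, key d3 n3, key (-d1) (neg_ne_zero.mpr n1),
      key (-d2) (neg_ne_zero.mpr n2), key (-d3) (neg_ne_zero.mpr n3)]
    have hneg : ∀ d : ZMod p, g * (-d)⁻¹ = -(g * d⁻¹) := by
      intro d; rw [inv_neg]; ring
    rw [hneg, hneg, hneg]
    have hu1 : g * d1⁻¹ ≠ 0 := mul_ne_zero hg (inv_ne_zero n1)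
    have hu2 : g * d2⁻¹ ≠ 0 := mul_ne_zero hg (inv_ne_zero n2)
    have hu3 : g * d3⁻¹ ≠ 0 := mul_ne_zero hg (inv_ne_zero n3)
    have notBoth : ∀ a b : ZMod p, a ≠ 0 → b ≠ 0 → ¬ MyCube (a * b⁻¹) →
        MyCube (g * a⁻¹) → MyCube (g * b⁻¹) → False := by
      intro a b ha hb hq hca hcb
      apply hq
      have := hcb.mul hca.inv
      have heq : g * b⁻¹ * (g * a⁻¹)⁻¹ = a * b⁻¹ := by
        field_simp
      rwa [heq] at this
    rcases exists_cube_class h1 n1 n2 n3 hg q12 q13 q23 with hc | hc | hc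
    · have p1 := pairYes _ hu1 hc
      have p2 := pairNo (g * d2⁻¹) (fun h => notBoth d1 d2 n1 n2 q12 hc h)
      have p3 := pairNo (g * d3⁻¹) (fun h => notBoth d1 d3 n1 n3 q13 hc h)
      rw [p2.1, p2.2, p3.1, p3.2]
      simpa using p1
    · have p1 := pairYes _ hu2 hc
      have p2 := pairNo (g * d1⁻¹) (fun h => notBoth d1 d2 n1 n2 q12 h hc)
      have p3 := pairNo (g * d3⁻¹) (fun h => notBoth d2 d3 n2 n3 q23 hc h)
      rw [p2.1, p2.2, p3.1, p3.2]
      simpa using p1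
    · have p1 := pairYes _ hu3 hc
      have p2 := pairNo (g * d1⁻¹) (fun h => notBoth d1 d3 n1 n3 q13 h hc)
      have p3 := pairNo (g * d2⁻¹) (fun h => notBoth d2 d3 n2 n3 q23 h hc)
      rw [p2.1, p2.2, p3.1, p3.2]
      simpa using p1
end master

lemma line_map_eq {p : ℕ} [Fact p.Prime] (S : Finset (ZMod p)) (j : Fin 7) (a b c : ℕ)
    (x y z : ZMod p)
    (ha : (j : ℕ) = a) (hb : ((j + 1 : Fin 7) : ℕ) = b) (hc : ((j + 3 : Fin 7) : ℕ) = c)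
    (hx : ((a : ℕ) : ZMod p) = x) (hy : ((b : ℕ) : ZMod p) = y) (hz : ((c : ℕ) : ZMod p) = z) :
    Multiset.map ((fun B => fanoLine B j) ∘ fun s => fun i : Fin 7 => s * ((i : ℕ) : ZMod p))
      S.val =
    Multiset.map (fun s => ({s * x, s * y, s * z} : Finset (ZMod p))) S.val :=
  Multiset.map_congr rfl fun s _ => by
    show ({s * ((j : ℕ) : ZMod p), s * (((j + 1 : Fin 7) : ℕ) : ZMod p),
      s * (((j + 3 : Fin 7) : ℕ) : ZMod p)} : Finset (ZMod p)) = _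
    rw [ha, hb, hc, hx, hy, hz]

/-- if `p ≡ 1 (mod 6)` is a prime such that 2 is not a cube while 6 and 20
are cubes mod `p`, then `A = (0,1,2,3,4,5,6)` is the initial block of an FKDF(p): for any
set `S` of representatives for the cosets of `{1,-1}` in the group of nonzero cubes, the
family `{s·A : s ∈ S}` is an FKDF in `ℤ/pℤ`. -/
theorem FKDF_initial_block_0123456
    (p : ℕ) (hp : p.Prime) (h1 : p % 6 = 1)
    (h2 : ¬ ∃ c : ZMod p, (2 : ZMod p) = c ^ 3)
    (h6 : ∃ c : ZMod p, (6 : ZMod p) = c ^ 3)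
    (h20 : ∃ c : ZMod p, (20 : ZMod p) = c ^ 3)
    (S : Finset (ZMod p))
    (hS1 : ∀ s ∈ S, s ≠ 0 ∧ ∃ c : ZMod p, s = c ^ 3)
    (hS2 : ∀ x : ZMod p, x ≠ 0 → (∃ c : ZMod p, x = c ^ 3) →
      ∃! s, s ∈ S ∧ (x = s ∨ x = -s)) :
    IsFKDF (S.val.map fun s => fun i : Fin 7 => s * ((i : ℕ) : ZMod p)) := by
  haveI : Fact p.Prime := ⟨hp⟩
  have hp7 : 7 ≤ p := by
    have := hp.two_le
    omega
  have hnatne : ∀ n : ℕ, 0 < n → n < p → ((n : ℕ) : ZMod p) ≠ 0 := by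
    intro n hn hnp h
    rw [ZMod.natCast_eq_zero_iff] at h
    have := Nat.le_of_dvd hn h
    omega
  have h2ne : (2 : ZMod p) ≠ 0 := by
    have := hnatne 2 (by norm_num) (by omega); simpa using this
  have h3ne : (3 : ZMod p) ≠ 0 := by
    have := hnatne 3 (by norm_num) (by omega); simpa using this
  have h4ne : (4 : ZMod p) ≠ 0 := by
    intro h
    have h' : ((4:ℕ) : ZMod p) = 0 := by push_cast; exact h
    rw [ZMod.natCast_eq_zero_iff] at h'
    have := Nat.le_of_dvd (by norm_num) h'
    omega
  have h5ne : (5 : ZMod p) ≠ 0 := by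
    intro h
    have h' : ((5:ℕ) : ZMod p) = 0 := by push_cast; exact h
    rw [ZMod.natCast_eq_zero_iff] at h'
    have := Nat.le_of_dvd (by norm_num) h'
    omega
  have h6ne : (6 : ZMod p) ≠ 0 := by
    intro h
    have h' : ((6:ℕ) : ZMod p) = 0 := by push_cast; exact h
    rw [ZMod.natCast_eq_zero_iff] at h'
    have := Nat.le_of_dvd (by norm_num) h'
    omega
  have h8ne : (8 : ZMod p) ≠ 0 := by
    intro h
    have h' : ((8:ℕ) : ZMod p) = 0 := by push_cast; exact h
    rw [ZMod.natCast_eq_zero_iff] at h'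
    have := Nat.le_of_dvd (by norm_num) h'
    interval_cases p <;> omega
  have h20ne : (20 : ZMod p) ≠ 0 := by
    intro h
    have h' : ((20:ℕ) : ZMod p) = 0 := by push_cast; exact h
    rw [ZMod.natCast_eq_zero_iff] at h'
    have := Nat.le_of_dvd (by norm_num) h'
    interval_cases p <;> omega
  -- cube facts
  have c6 : MyCube (6 : ZMod p) := h6
  have c20 : MyCube (20 : ZMod p) := h20
  have nc2 : ¬ MyCube (2 : ZMod p) := h2
  have c8 : MyCube (8 : ZMod p) := ⟨2, by norm_num⟩
  have nc3 : ¬ MyCube (3 : ZMod p) := by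
    intro h
    apply nc2
    have := c6.mul h.inv
    rwa [show (6 : ZMod p) * 3⁻¹ = 2 by field_simp; ring] at this
  have nc4 : ¬ MyCube (4 : ZMod p) := by
    intro h
    apply nc2
    have := c8.mul h.inv
    rwa [show (8 : ZMod p) * 4⁻¹ = 2 by field_simp; ring] at this
  have nc5 : ¬ MyCube (5 : ZMod p) := by
    intro h
    apply nc4
    have := c20.mul h.inv
    rwa [show (20 : ZMod p) * 5⁻¹ = 4 by field_simp; ring] at this
  have nc32 : ¬ MyCube ((3 : ZMod p) * 2⁻¹) := by
    intro h
    apply nc4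
    have := h.inv.mul c6
    rwa [show ((3 : ZMod p) * 2⁻¹)⁻¹ * 6 = 4 by
      rw [mul_inv, inv_inv]; field_simp; ring] at this
  have nc45 : ¬ MyCube ((4 : ZMod p) * 5⁻¹) := by
    intro h
    apply nc2
    have h16 : MyCube (16 : ZMod p) := by
      have := h.mul c20
      rwa [show (4 : ZMod p) * 5⁻¹ * 20 = 16 by field_simp; ring] at this
    have := h16.mul c8.inv
    rwa [show (16 : ZMod p) * 8⁻¹ = 2 by field_simp; ring] at this
  -- the nine quotient non-cube facts
  have qa12 : ¬ MyCube ((1 : ZMod p) * 3⁻¹) := by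
    intro h
    apply nc3
    have := h.inv
    rwa [show ((1 : ZMod p) * 3⁻¹)⁻¹ = 3 by field_simp] at this
  have qa13 : ¬ MyCube ((1 : ZMod p) * 2⁻¹) := by
    intro h
    apply nc2
    have := h.inv
    rwa [show ((1 : ZMod p) * 2⁻¹)⁻¹ = 2 by field_simp] at this
  have qb12 : ¬ MyCube ((1 : ZMod p) * (-4)⁻¹) := by
    intro h
    apply nc4
    have := h.inv
    rw [show ((1 : ZMod p) * (-4)⁻¹)⁻¹ = -4 by
      rw [one_mul, inv_inv]] at this
    exact myCube_neg_iff.mp this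
  have qb13 : ¬ MyCube ((1 : ZMod p) * (-5)⁻¹) := by
    intro h
    apply nc5
    have := h.inv
    rw [show ((1 : ZMod p) * (-5)⁻¹)⁻¹ = -5 by
      rw [one_mul, inv_inv]] at this
    exact myCube_neg_iff.mp this
  have qb23 : ¬ MyCube ((-4 : ZMod p) * (-5)⁻¹) := by
    intro h
    apply nc45
    rwa [show (-4 : ZMod p) * (-5)⁻¹ = 4 * 5⁻¹ by rw [inv_neg]; ring] at h
  have qc12 : ¬ MyCube ((-6 : ZMod p) * (-4)⁻¹) := by
    intro h
    apply nc32
    rwa [show (-6 : ZMod p) * (-4)⁻¹ = 3 * 2⁻¹ by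
      rw [inv_neg]
      field_simp
      ring] at h
  have qc13 : ¬ MyCube ((-6 : ZMod p) * 2⁻¹) := by
    intro h
    apply nc3
    rw [show (-6 : ZMod p) * 2⁻¹ = -3 by field_simp; ring] at h
    exact myCube_neg_iff.mp h
  have qc23 : ¬ MyCube ((-4 : ZMod p) * 2⁻¹) := by
    intro h
    apply nc2
    rw [show (-4 : ZMod p) * 2⁻¹ = -2 by field_simp; ring] at h
    exact myCube_neg_iff.mp h
  have hS1' : ∀ s ∈ S, s ≠ 0 ∧ MyCube s := hS1
  have hS2' : ∀ x : ZMod p, x ≠ 0 → MyCube x → ∃! s, s ∈ S ∧ (x = s ∨ x = -s) := hS2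
  constructor
  · intro B hB
    obtain ⟨s, hsmem, rfl⟩ := Multiset.mem_map.mp hB
    have hs : s ∈ S := hsmem
    have hs0 := (hS1' s hs).1
    intro i j hij
    have hc : ((i : ℕ) : ZMod p) = ((j : ℕ) : ZMod p) := mul_left_cancel₀ hs0 hij
    have hv : (((i : ℕ) : ZMod p)).val = (((j : ℕ) : ZMod p)).val := by rw [hc]
    rw [ZMod.val_cast_of_lt (lt_of_lt_of_le i.isLt hp7),
      ZMod.val_cast_of_lt (lt_of_lt_of_le j.isLt hp7)] at hv
    exact Fin.ext hv
  · intro j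
    rw [Multiset.map_map]
    fin_cases j
    · show IsDiffFamily 3 1 (Multiset.map ((fun B => fanoLine B (0 : Fin 7)) ∘
          fun s => fun i : Fin 7 => s * ((i : ℕ) : ZMod p)) S.val)
      rw [line_map_eq S (0 : Fin 7) 0 1 3 0 1 3 (by decide) (by decide) (by decide) (by norm_num) (by norm_num) (by norm_num)]
      exact master h1 S hS1' hS2' 0 1 3 1 3 2 (by ring) (by ring) (by ring)
        one_ne_zero h3ne h2ne qa12 qa13 nc32
    · show IsDiffFamily 3 1 (Multiset.map ((fun B => fanoLine B (1 : Fin 7)) ∘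
          fun s => fun i : Fin 7 => s * ((i : ℕ) : ZMod p)) S.val)
      rw [line_map_eq S (1 : Fin 7) 1 2 4 1 2 4 (by decide) (by decide) (by decide) (by norm_num) (by norm_num) (by norm_num)]
      exact master h1 S hS1' hS2' 1 2 4 1 3 2 (by ring) (by ring) (by ring)
        one_ne_zero h3ne h2ne qa12 qa13 nc32
    · show IsDiffFamily 3 1 (Multiset.map ((fun B => fanoLine B (2 : Fin 7)) ∘
          fun s => fun i : Fin 7 => s * ((i : ℕ) : ZMod p)) S.val)
      rw [line_map_eq S (2 : Fin 7) 2 3 5 2 3 5 (by decide) (by decide) (by decide) (by norm_num) (by norm_num) (by norm_num)]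
      exact master h1 S hS1' hS2' 2 3 5 1 3 2 (by ring) (by ring) (by ring)
        one_ne_zero h3ne h2ne qa12 qa13 nc32
    · show IsDiffFamily 3 1 (Multiset.map ((fun B => fanoLine B (3 : Fin 7)) ∘
          fun s => fun i : Fin 7 => s * ((i : ℕ) : ZMod p)) S.val)
      rw [line_map_eq S (3 : Fin 7) 3 4 6 3 4 6 (by decide) (by decide) (by decide) (by norm_num) (by norm_num) (by norm_num)]
      exact master h1 S hS1' hS2' 3 4 6 1 3 2 (by ring) (by ring) (by ring)
        one_ne_zero h3ne h2ne qa12 qa13 nc32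
    · show IsDiffFamily 3 1 (Multiset.map ((fun B => fanoLine B (4 : Fin 7)) ∘
          fun s => fun i : Fin 7 => s * ((i : ℕ) : ZMod p)) S.val)
      rw [line_map_eq S (4 : Fin 7) 4 5 0 4 5 0 (by decide) (by decide) (by decide) (by norm_num) (by norm_num) (by norm_num)]
      exact master h1 S hS1' hS2' 4 5 0 1 (-4) (-5) (by ring) (by ring) (by ring)
        one_ne_zero (neg_ne_zero.mpr h4ne) (neg_ne_zero.mpr h5ne) qb12 qb13 qb23
    · show IsDiffFamily 3 1 (Multiset.map ((fun B => fanoLine B (5 : Fin 7)) ∘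
          fun s => fun i : Fin 7 => s * ((i : ℕ) : ZMod p)) S.val)
      rw [line_map_eq S (5 : Fin 7) 5 6 1 5 6 1 (by decide) (by decide) (by decide) (by norm_num) (by norm_num) (by norm_num)]
      exact master h1 S hS1' hS2' 5 6 1 1 (-4) (-5) (by ring) (by ring) (by ring)
        one_ne_zero (neg_ne_zero.mpr h4ne) (neg_ne_zero.mpr h5ne) qb12 qb13 qb23
    · show IsDiffFamily 3 1 (Multiset.map ((fun B => fanoLine B (6 : Fin 7)) ∘
          fun s => fun i : Fin 7 => s * ((i : ℕ) : ZMod p)) S.val)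
      rw [line_map_eq S (6 : Fin 7) 6 0 2 6 0 2 (by decide) (by decide) (by decide) (by norm_num) (by norm_num) (by norm_num)]
      exact master h1 S hS1' hS2' 6 0 2 (-6) (-4) 2 (by ring) (by ring) (by ring)
        (neg_ne_zero.mpr h6ne) (neg_ne_zero.mpr h4ne) h2ne qc12 qc13 qc23
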